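/- Let Δ = ⋂_{i=1}^d {x ∈ ℝⁿ : ⟨x, v_i⟩ ≤ λ_i} be a compact polytope centered at the origin with shrinking-procedure data: dimension-drop times t₁ < ... < t_{M+1}, index sets D_j = {i : λ_i = t_j}, remaining indices grouped as I_k = {i : λ_i = λ_{j_k}} with t_{M+1} < λ_{j_1} < ... < λ_{j_N}, and orthogonal projections π_j^⊥ : ℝⁿ → ℝ^{k₁+...+k_j}. Suppose M = 0. Then Δ = ⋂_{k=0}^N Δ̃ⁿ_k, where Δ̃ⁿ_0 = ⋂_{i ∈ D₁∪...∪D_{M+1}} {x : ⟨x, v_i⟩ ≤ t_{M+1}} and Δ̃ⁿ_k = ⋂_{i ∈ D₁∪...∪D_{M+1}∪I_k} {x : ⟨x, v_i⟩ ≤ λ_{j_k}} for k ≥ 1; each Δ̃ⁿ_k is a compact monotone polytope of dimension n. -/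
import Mathlib

open Matrix

private lemma dot_cont {n d : ℕ} (v : Fin d → Fin n → ℝ) (i : Fin d) :
    Continuous fun x : Fin n → ℝ => x ⬝ᵥ v i := by
  unfold dotProduct
  exact continuous_finset_sum _ fun j _ => (continuous_apply j).mul continuous_const

private lemma aux_bounded {n d : ℕ} (v : Fin d → Fin n → ℝ) (lam : Fin d → ℝ) (T : ℝ)
    (hcentered : {x : Fin n → ℝ | ∀ i, lam i = T → x ⬝ᵥ v i ≤ 0} = {0}) (c : ℝ) :
    Bornology.IsBounded {x : Fin n → ℝ | ∀ i, lam i = T → x ⬝ᵥ v i ≤ c} := by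
  by_cases hex : ∃ x : Fin n → ℝ, x ≠ 0
  · obtain ⟨x0, hx0⟩ := hex
    -- D nonempty
    have hD : (Finset.univ.filter (fun i => lam i = T)).Nonempty := by
      by_contra h
      rw [Finset.not_nonempty_iff_eq_empty, Finset.filter_eq_empty_iff] at h
      have : x0 ∈ ({0} : Set (Fin n → ℝ)) := by
        rw [← hcentered]; intro i hi; exact absurd hi (h (Finset.mem_univ i))
      exact hx0 this
    set D := Finset.univ.filter (fun i => lam i = T) with hDdef
    set g : (Fin n → ℝ) → ℝ := fun x => D.sup' hD (fun i => x ⬝ᵥ v i) with hg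
    have hgcont : Continuous g := by
      rw [continuous_iff_continuousAt]
      intro a
      exact Filter.Tendsto.finset_sup'_nhds_apply hD
        (fun i _ => ((dot_cont v i).tendsto a))
    -- sphere nonempty
    have hxn : ‖x0‖ ≠ 0 := norm_ne_zero_iff.mpr hx0
    have hsne : (Metric.sphere (0 : Fin n → ℝ) 1).Nonempty := by
      refine ⟨‖x0‖⁻¹ • x0, ?_⟩
      simp [norm_smul, abs_of_nonneg (inv_nonneg.mpr (norm_nonneg x0)),
        inv_mul_cancel₀ hxn]
    obtain ⟨u0, hu0mem, hu0min⟩ :=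
      (isCompact_sphere (0 : Fin n → ℝ) 1).exists_isMinOn hsne hgcont.continuousOn
    have hu0 : u0 ≠ 0 := by
      intro h
      rw [mem_sphere_zero_iff_norm, h, norm_zero] at hu0mem; norm_num at hu0mem
    have hε : 0 < g u0 := by
      have : u0 ∉ ({0} : Set (Fin n → ℝ)) := by simpa using hu0
      rw [← hcentered] at this
      simp only [Set.mem_setOf_eq, not_forall] at this
      obtain ⟨i, hi, hlt⟩ := this
      push_neg at hlt
      calc (0:ℝ) < u0 ⬝ᵥ v i := hlt
        _ ≤ g u0 := by
            show u0 ⬝ᵥ v i ≤ D.sup' hD fun j => u0 ⬝ᵥ v j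
            exact Finset.le_sup' (fun j => u0 ⬝ᵥ v j) (Finset.mem_filter.mpr ⟨Finset.mem_univ i, hi⟩)
    set ε := g u0 with hεdef
    refine (Metric.isBounded_closedBall (x := (0 : Fin n → ℝ)) (r := max 0 (c / ε))).subset ?_
    intro x hx
    rw [Metric.mem_closedBall, dist_zero_right]
    by_cases hx0' : x = 0
    · simp [hx0']
    · have hxn' : (0:ℝ) < ‖x‖ := norm_pos_iff.mpr hx0'
      have husph : ‖x‖⁻¹ • x ∈ Metric.sphere (0 : Fin n → ℝ) 1 := by
        simp [norm_smul, abs_of_nonneg (inv_nonneg.mpr (norm_nonneg x)),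
          inv_mul_cancel₀ hxn'.ne']
      have h1 : ε ≤ g (‖x‖⁻¹ • x) := hu0min husph
      obtain ⟨i, hiD, hieq⟩ := Finset.exists_mem_eq_sup' hD (fun i => (‖x‖⁻¹ • x) ⬝ᵥ v i)
      have hiT : lam i = T := by simpa [hDdef] using hiD
      have h2 : ε ≤ ‖x‖⁻¹ * (x ⬝ᵥ v i) := by
        have h1' : ε ≤ D.sup' hD fun j => (‖x‖⁻¹ • x) ⬝ᵥ v j := h1
        rw [hieq, smul_dotProduct] at h1'
        simpa using h1'
      have h3 : x ⬝ᵥ v i ≤ c := hx i hiT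
      have h4 : ε * ‖x‖ ≤ c := by
        have := mul_le_mul_of_nonneg_right h2 (le_of_lt hxn')
        calc ε * ‖x‖ ≤ ‖x‖⁻¹ * (x ⬝ᵥ v i) * ‖x‖ := this
          _ = x ⬝ᵥ v i := by field_simp
          _ ≤ c := h3
      have : ‖x‖ ≤ c / ε := by
        rw [le_div_iff₀ hε]; linarith [h4]
      exact this.trans (le_max_right _ _)
  · push_neg at hex
    have : {x : Fin n → ℝ | ∀ i, lam i = T → x ⬝ᵥ v i ≤ c} ⊆ {0} := by
      intro x _; simp [hex x]
    exact (Set.finite_singleton _).isBounded.subset this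

private lemma aux_closed {n d : ℕ} (v : Fin d → Fin n → ℝ) (P : Fin d → Prop) (c : ℝ) :
    IsClosed {x : Fin n → ℝ | ∀ i, P i → x ⬝ᵥ v i ≤ c} := by
  have hs : {x : Fin n → ℝ | ∀ i, P i → x ⬝ᵥ v i ≤ c}
      = ⋂ i, {x | P i → x ⬝ᵥ v i ≤ c} := by
    ext x; simp [Set.mem_iInter]
  rw [hs]
  refine isClosed_iInter fun i => ?_
  by_cases h : P i
  · have : {x : Fin n → ℝ | P i → x ⬝ᵥ v i ≤ c} = {x | x ⬝ᵥ v i ≤ c} := by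
      ext x; simp [h]
    rw [this]; exact isClosed_le (dot_cont v i) continuous_const
  · have : {x : Fin n → ℝ | P i → x ⬝ᵥ v i ≤ c} = Set.univ := by
      ext x; simp [h]
    rw [this]; exact isClosed_univ

private lemma aux_span {n d : ℕ} (v : Fin d → Fin n → ℝ) (c : ℝ) (hc : 0 < c)
    (P : Fin d → Prop) :
    affineSpan ℝ {x : Fin n → ℝ | ∀ i, P i → x ⬝ᵥ v i ≤ c} = ⊤ := by
  set V : ℝ := 1 + ∑ i, ∑ j, |v i j| with hVdef
  have hV : 0 < V := by positivity
  have hball : Metric.ball (0 : Fin n → ℝ) (c / V)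
      ⊆ {x : Fin n → ℝ | ∀ i, P i → x ⬝ᵥ v i ≤ c} := by
    intro x hx i _
    have hxn : ‖x‖ < c / V := by simpa [dist_zero_right] using hx
    have hsum : ∑ j, |v i j| ≤ V := by
      rw [hVdef]
      have : ∑ j, |v i j| ≤ ∑ i', ∑ j, |v i' j| :=
        Finset.single_le_sum (f := fun i' => ∑ j, |v i' j|)
          (fun i' _ => Finset.sum_nonneg fun j _ => abs_nonneg _) (Finset.mem_univ i)
      linarith
    have h1 : x ⬝ᵥ v i ≤ ‖x‖ * V := by
      calc x ⬝ᵥ v i ≤ |x ⬝ᵥ v i| := le_abs_self _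
        _ ≤ ∑ j, |x j * v i j| := Finset.abs_sum_le_sum_abs _ _
        _ ≤ ∑ j, ‖x‖ * |v i j| := Finset.sum_le_sum fun j _ => by
            rw [abs_mul]
            refine mul_le_mul_of_nonneg_right ?_ (abs_nonneg _)
            simpa [Real.norm_eq_abs] using norm_le_pi_norm x j
        _ = ‖x‖ * ∑ j, |v i j| := by rw [Finset.mul_sum]
        _ ≤ ‖x‖ * V := mul_le_mul_of_nonneg_left hsum (norm_nonneg x)
    have h2 : ‖x‖ * V < (c / V) * V := mul_lt_mul_of_pos_right hxn hV
    have h3 : (c / V) * V = c := div_mul_cancel₀ c hV.ne'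
    rw [h3] at h2
    exact (h1.trans_lt h2).le
  apply affineSpan_eq_top_of_nonempty_interior
  refine ⟨0, ?_⟩
  have hsub : Metric.ball (0 : Fin n → ℝ) (c / V)
      ⊆ interior (convexHull ℝ {x : Fin n → ℝ | ∀ i, P i → x ⬝ᵥ v i ≤ c}) :=
    interior_maximal (hball.trans (subset_convexHull ℝ _)) Metric.isOpen_ball
  exact hsub (Metric.mem_ball_self (by positivity))

/-- Theorem 1, case `M = 0`: a centered polytope `Δ` with one dimension drop (at time `T`,
`D₁ = D_{M+1} = {i | λᵢ = T}`) and remaining constraint values `T < μ₁ < … < μ_N`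
(`I_k = {i | λᵢ = μ_k}`) is the intersection `⋂_{k=0}^N Δ̃ⁿ_k` of the monotone polytopes
`Δ̃ⁿ_0 = {x | ⟨x, vᵢ⟩ ≤ T, i ∈ D₁}` and `Δ̃ⁿ_k = {x | ⟨x, vᵢ⟩ ≤ μ_k, i ∈ D₁ ∪ I_k}`,
each of which is compact and full-dimensional. Centeredness is encoded by the shrunk
polytope at time `T` being `{0}`. -/
theorem stmt7 (n d N : ℕ) (v : Fin d → Fin n → ℝ) (lam : Fin d → ℝ)
    (T : ℝ) (hT : 0 < T)
    (μ : Fin N → ℝ) (hμ : StrictMono μ) (hTμ : ∀ k, T < μ k)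
    (hpart : ∀ i, lam i = T ∨ ∃ k, lam i = μ k)
    (hΔcompact : IsCompact {x : Fin n → ℝ | ∀ i, x ⬝ᵥ v i ≤ lam i})
    (hcentered : {x : Fin n → ℝ | ∀ i, lam i = T → x ⬝ᵥ v i ≤ 0} = {0}) :
    ({x : Fin n → ℝ | ∀ i, x ⬝ᵥ v i ≤ lam i} =
        {x | ∀ i, lam i = T → x ⬝ᵥ v i ≤ T} ∩
          ⋂ k : Fin N, {x | ∀ i, (lam i = T ∨ lam i = μ k) → x ⬝ᵥ v i ≤ μ k}) ∧
      IsCompact {x : Fin n → ℝ | ∀ i, lam i = T → x ⬝ᵥ v i ≤ T} ∧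
      (∀ k : Fin N,
        IsCompact {x : Fin n → ℝ | ∀ i, (lam i = T ∨ lam i = μ k) → x ⬝ᵥ v i ≤ μ k}) ∧
      affineSpan ℝ {x : Fin n → ℝ | ∀ i, lam i = T → x ⬝ᵥ v i ≤ T} = ⊤ ∧
      (∀ k : Fin N,
        affineSpan ℝ {x : Fin n → ℝ | ∀ i, (lam i = T ∨ lam i = μ k) → x ⬝ᵥ v i ≤ μ k}
          = ⊤) := by
  refine ⟨?_, ?_, ?_, ?_, ?_⟩
  · ext x
    simp only [Set.mem_setOf_eq, Set.mem_inter_iff, Set.mem_iInter]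
    constructor
    · intro hx
      refine ⟨fun i hi => by rw [← hi]; exact hx i, fun k i hi => ?_⟩
      rcases hi with hi | hi
      · have h := hx i
        rw [hi] at h
        exact h.trans (hTμ k).le
      · rw [← hi]; exact hx i
    · rintro ⟨h0, hk⟩ i
      rcases hpart i with hi | ⟨k, hik⟩
      · rw [hi]; exact h0 i hi
      · rw [hik]; exact hk k i (Or.inr hik)
  · exact Metric.isCompact_of_isClosed_isBounded (aux_closed v _ T)
      (aux_bounded v lam T hcentered T)
  · intro k
    refine Metric.isCompact_of_isClosed_isBounded (aux_closed v _ (μ k)) ?_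
    refine (aux_bounded v lam T hcentered (μ k)).subset ?_
    intro x hx i hi
    exact hx i (Or.inl hi)
  · exact aux_span v T hT _
  · intro k; exact aux_span v (μ k) (hT.trans (hTμ k)) _
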